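/- Let G = K ⋊_θ Q with Z(K) = 1. If q ∈ Q has finite conjugacy class in Q and θ_q(x) = k⁻¹xk for all x ∈ K (some fixed k ∈ K), then the θ(Q)-orbit of k is finite. -/
import Mathlib


/-- The conjugacy class of `u` in `G`. -/
def conjClass {G : Type*} [Group G] (u : G) : Set G := {x | IsConj u x}

/-- A group is icc if it is nontrivial and every nontrivial conjugacy class is infinite. -/
def IsICC (G : Type*) [Group G] : Prop :=
  Nontrivial G ∧ ∀ g : G, g ≠ 1 → (conjClass g).Infinite

theorem finite_orbit_of_inner_centerless {K Q : Type*} [Group K] [Group Q]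
    (θ : Q →* MulAut K) (hZ : Subgroup.center K = ⊥)
    (q : Q) (hq : (conjClass q).Finite) (k : K)
    (hconj : ∀ x : K, θ q x = k⁻¹ * x * k) :
    (Set.range fun p : Q => θ p k).Finite := by
  classical
  -- Step 1: centralizing elements fix k.
  have hfix : ∀ p : Q, p * q = q * p → θ p k = k := by
    intro p hc
    have hcomm : ∀ x : K, θ p (θ q x) = θ q (θ p x) := by
      intro x
      have h1 : θ (p * q) x = θ (q * p) x := by rw [hc]
      simpa [map_mul] using h1
    have key : ∀ y : K, (θ p k)⁻¹ * y * θ p k = k⁻¹ * y * k := by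
      intro y
      have h2 := hcomm ((θ p)⁻¹ y)
      rw [hconj, hconj] at h2
      simp only [map_mul, map_inv] at h2
      have h3 : θ p ((θ p)⁻¹ y) = y := by
        exact (θ p).apply_symm_apply y
      rw [h3] at h2
      exact h2
    have hz : θ p k * k⁻¹ ∈ Subgroup.center K := by
      rw [Subgroup.mem_center_iff]
      intro y
      have := key y
      have h4 : y * θ p k = θ p k * (k⁻¹ * y * k) := by
        rw [← this]; group
      calc y * (θ p k * k⁻¹) = (y * θ p k) * k⁻¹ := by group
        _ = θ p k * (k⁻¹ * y * k) * k⁻¹ := by rw [h4]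
        _ = (θ p k * k⁻¹) * y := by group
    rw [hZ, Subgroup.mem_bot] at hz
    have : θ p k = k := by
      have := mul_inv_eq_one.mp hz
      exact this
    exact this
  -- Step 2: if p and p' conjugate q to the same element, they move k the same way.
  have key2 : ∀ p p' : Q, p * q * p⁻¹ = p' * q * p'⁻¹ → θ p k = θ p' k := by
    intro p p' h
    have hc : (p'⁻¹ * p) * q = q * (p'⁻¹ * p) := by
      have h' : p * q * p⁻¹ * p = p' * q * p'⁻¹ * p := by rw [h]
      have h'' : p * q = p' * q * p'⁻¹ * p := by
        simpa [mul_assoc] using h'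
      calc (p'⁻¹ * p) * q = p'⁻¹ * (p * q) := by group
        _ = p'⁻¹ * (p' * q * p'⁻¹ * p) := by rw [h'']
        _ = q * (p'⁻¹ * p) := by group
    have hf := hfix _ hc
    calc θ p k = θ (p' * (p'⁻¹ * p)) k := by group
      _ = θ p' (θ (p'⁻¹ * p) k) := by simp [map_mul]
      _ = θ p' k := by rw [hf]
  -- Step 3: factor through the conjugacy class.
  set g : Q → K := fun x =>
    if h : ∃ c : Q, c * q * c⁻¹ = x then θ h.choose k else 1 with hg
  have hsub : (Set.range fun p : Q => θ p k) ⊆ g '' conjClass q := by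
    rintro _ ⟨p, rfl⟩
    refine ⟨p * q * p⁻¹, isConj_iff.mpr ⟨p, rfl⟩, ?_⟩
    have hex : ∃ c : Q, c * q * c⁻¹ = p * q * p⁻¹ := ⟨p, rfl⟩
    have : g (p * q * p⁻¹) = θ hex.choose k := by
      rw [hg]; simp [dif_pos hex]
    rw [this]
    exact key2 _ _ (hex.choose_spec)
  exact (hq.image g).subset hsub
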